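/- If c₂ ≠ 0, then the interior CMC slice is defined for all sufficiently small r > 0 and the interior Brown–York mass blows up at the Schwarzschild singularity at rate r^(−1): lim_{r→0⁺} r·m_BY(r) = −|c₂|. -/

import Mathlib

open Real Filter Topology Set

/-- Schwarzschild lapse-type function `f(r) = 1 - 2M/r` (negative in the interior
`0 < r < 2M`). -/
noncomputable def f (M r : ℝ) : ℝ := 1 - 2 * M / r

/-- `P(r) = Ĥ·r + c₂/r²`. -/
noncomputable def P (H c2 r : ℝ) : ℝ := H * r + c2 / r ^ 2

/-- Slope of the interior CMC slice:
`𝔥'(r) = |P(r)|/((2M/r − 1)·√(P(r)² + f(r)))`, defined on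
`{0 < r < 2M : P(r)² + f(r) > 0}`. -/
noncomputable def hInt' (M H c2 r : ℝ) : ℝ :=
  |P H c2 r| / ((2 * M / r - 1) * Real.sqrt ((P H c2 r) ^ 2 + f M r))

/-- Interior Brown–York mass `m_BY(r) = r(1 − (f⁻¹ − f 𝔥'²)^(−1/2))`. -/
noncomputable def mBYint (M H c2 r : ℝ) : ℝ :=
  r * (1 - ((f M r)⁻¹ - f M r * (hInt' M H c2 r) ^ 2) ^ (-(1 : ℝ) / 2))

lemma key (M H c2 r : ℝ) (hr : 0 < r) (hrM : r < 2 * M)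
    (hg : 0 < (H * r ^ 3 + c2) ^ 2 + r ^ 4 - 2 * M * r ^ 3) :
    r * mBYint M H c2 r =
      r ^ 2 - Real.sqrt ((H * r ^ 3 + c2) ^ 2 + r ^ 4 - 2 * M * r ^ 3) := by
  have hr0 : r ≠ 0 := hr.ne'
  set s := P H c2 r with hs
  set ff := f M r with hffdef
  have hP2f : s ^ 2 + ff = ((H * r ^ 3 + c2) ^ 2 + r ^ 4 - 2 * M * r ^ 3) / r ^ 4 := by
    rw [hs, hffdef]; unfold P f; field_simp; ring
  have hpos : 0 < s ^ 2 + ff := hP2f ▸ div_pos hg (by positivity)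
  have hff : ff < 0 := by
    rw [hffdef]; unfold f
    have : 1 < 2 * M / r := (one_lt_div hr).2 hrM
    linarith
  have hneg : 2 * M / r - 1 = -ff := by rw [hffdef]; unfold f; ring
  have hsq : hInt' M H c2 r ^ 2 = s ^ 2 / (ff ^ 2 * (s ^ 2 + ff)) := by
    unfold hInt'
    rw [div_pow, mul_pow, sq_abs, Real.sq_sqrt hpos.le, hneg, neg_pow]
    norm_num; rfl
  have hQ : (ff)⁻¹ - ff * hInt' M H c2 r ^ 2 = (s ^ 2 + ff)⁻¹ := by
    rw [hsq]; field_simp [hff.ne, hpos.ne']; ring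
  have hrpow : ((s ^ 2 + ff)⁻¹ : ℝ) ^ (-(1 : ℝ) / 2) = Real.sqrt (s ^ 2 + ff) := by
    rw [Real.inv_rpow hpos.le, show (-(1 : ℝ) / 2) = -(1 / 2) by norm_num,
      Real.rpow_neg hpos.le, inv_inv, ← Real.sqrt_eq_rpow]
  have hsqg : r ^ 2 * Real.sqrt (s ^ 2 + ff)
      = Real.sqrt ((H * r ^ 3 + c2) ^ 2 + r ^ 4 - 2 * M * r ^ 3) := by
    rw [show ((H * r ^ 3 + c2) ^ 2 + r ^ 4 - 2 * M * r ^ 3)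
        = r ^ 4 * (s ^ 2 + ff) by rw [hP2f]; field_simp,
      Real.sqrt_mul (by positivity), show (r ^ 4 : ℝ) = (r ^ 2) ^ 2 by ring,
      Real.sqrt_sq (by positivity)]
  unfold mBYint
  rw [hQ, hrpow, ← hsqg]; ring

/-- If `c₂ ≠ 0`, then the interior CMC slice is defined for all sufficiently small
`r > 0` and the interior Brown–York mass blows up at the Schwarzschild singularity at
rate `r^(−1)`: `lim_{r→0⁺} r·m_BY(r) = −|c₂|`. -/
theorem interior_brown_york_blowup (M H c2 : ℝ) (hM : 0 < M) (hc : c2 ≠ 0) :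
    (∀ᶠ r in 𝓝[>] (0 : ℝ), r < 2 * M ∧ 0 < (P H c2 r) ^ 2 + f M r) ∧
    Tendsto (fun r => r * mBYint M H c2 r) (𝓝[>] (0 : ℝ)) (𝓝 (-|c2|)) := by
  set g : ℝ → ℝ := fun r => (H * r ^ 3 + c2) ^ 2 + r ^ 4 - 2 * M * r ^ 3 with hgdef
  have hgcont : Continuous g := by unfold g; continuity
  have hg0 : g 0 = c2 ^ 2 := by simp [hgdef]
  have htg : Tendsto g (𝓝[>] (0 : ℝ)) (𝓝 (c2 ^ 2)) := by
    have := (hgcont.tendsto 0).mono_left (nhdsWithin_le_nhds (s := Ioi (0 : ℝ)))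
    rwa [hg0] at this
  have hgpos : ∀ᶠ r in 𝓝[>] (0 : ℝ), 0 < g r :=
    htg.eventually (eventually_gt_nhds (by positivity))
  have hrpos : ∀ᶠ r in 𝓝[>] (0 : ℝ), 0 < r := eventually_mem_nhdsWithin
  have hrlt : ∀ᶠ r in 𝓝[>] (0 : ℝ), r < 2 * M := by
    have : Tendsto (fun r : ℝ => r) (𝓝[>] (0 : ℝ)) (𝓝 0) :=
      tendsto_id.mono_left nhdsWithin_le_nhds
    exact this.eventually (eventually_lt_nhds (by positivity))
  constructor
  · filter_upwards [hgpos, hrpos, hrlt] with r hg hr hrM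
    refine ⟨hrM, ?_⟩
    have hP2f : P H c2 r ^ 2 + f M r = g r / r ^ 4 := by
      unfold P f; rw [hgdef]; field_simp; ring
    rw [hP2f]; positivity
  · have hlim : Tendsto (fun r => r ^ 2 - Real.sqrt (g r)) (𝓝[>] (0 : ℝ))
        (𝓝 (-|c2|)) := by
      have h1 : Tendsto (fun r : ℝ => r ^ 2) (𝓝[>] (0 : ℝ)) (𝓝 0) := by
        have := ((continuous_pow 2).tendsto (0 : ℝ)).mono_left
          (nhdsWithin_le_nhds (s := Ioi (0 : ℝ)))
        simpa using this
      have h2 : Tendsto (fun r => Real.sqrt (g r)) (𝓝[>] (0 : ℝ)) (𝓝 |c2|) := by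
        have := (Real.continuous_sqrt.tendsto (c2 ^ 2)).comp htg
        simpa [Real.sqrt_sq_eq_abs, Function.comp_def] using this
      simpa using h1.sub h2
    refine hlim.congr' ?_
    filter_upwards [hgpos, hrpos, hrlt] with r hg hr hrM
    exact (key M H c2 r hr hrM hg).symm
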